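/- min over η ∈ [0,1] of max(1/(1+η), (1/2 + η + η²/2)/(1+η)) equals 1/√2, with the minimum attained at η = √2 - 1. -/
import Mathlib

lemma epr_aux (η : ℝ) (h0 : 0 ≤ η) :
    (1 / 2 + η + η ^ 2 / 2) / (1 + η) = (1 + η) / 2 := by
  have h : (1:ℝ) + η ≠ 0 := by linarith
  field_simp
  ring

lemma epr_sqrt2 : 1 ≤ Real.sqrt 2 ∧ Real.sqrt 2 ≤ 2 ∧ Real.sqrt 2 ^ 2 = 2 := by
  have h1 : (1:ℝ) ≤ Real.sqrt 2 := by
    rw [show (1:ℝ) = Real.sqrt 1 by simp]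
    exact Real.sqrt_le_sqrt (by norm_num)
  have h3 : Real.sqrt 2 ^ 2 = 2 := Real.sq_sqrt (by norm_num)
  have h2 : Real.sqrt 2 ≤ 2 := by nlinarith
  exact ⟨h1, h2, h3⟩

theorem epr_ratio_min :
    IsLeast {r : ℝ | ∃ η ∈ Set.Icc (0:ℝ) 1,
        r = max (1 / (1 + η)) ((1 / 2 + η + η ^ 2 / 2) / (1 + η))} (1 / Real.sqrt 2) ∧
      max (1 / (1 + (Real.sqrt 2 - 1)))
        ((1 / 2 + (Real.sqrt 2 - 1) + (Real.sqrt 2 - 1) ^ 2 / 2) / (1 + (Real.sqrt 2 - 1)))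
        = 1 / Real.sqrt 2 := by
  obtain ⟨h1, h2, h3⟩ := epr_sqrt2
  have hval : max (1 / (1 + (Real.sqrt 2 - 1)))
      ((1 / 2 + (Real.sqrt 2 - 1) + (Real.sqrt 2 - 1) ^ 2 / 2) / (1 + (Real.sqrt 2 - 1)))
      = 1 / Real.sqrt 2 := by
    rw [epr_aux _ (by linarith)]
    have he : 1 + (Real.sqrt 2 - 1) = Real.sqrt 2 := by ring
    rw [he]
    have hs0 : (0:ℝ) < Real.sqrt 2 := by linarith
    have : Real.sqrt 2 / 2 = 1 / Real.sqrt 2 := by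
      rw [div_eq_div_iff (by norm_num) hs0.ne']; nlinarith
    rw [this, max_self]
  refine ⟨⟨⟨Real.sqrt 2 - 1, ⟨by linarith, by linarith⟩, hval.symm⟩, ?_⟩, hval⟩
  rintro r ⟨η, ⟨hη0, hη1⟩, rfl⟩
  rw [epr_aux η hη0]
  have hp : (0:ℝ) < 1 + η := by linarith
  have hs0 : (0:ℝ) < Real.sqrt 2 := by linarith
  rcases le_or_gt (1 + η) (Real.sqrt 2) with h | h
  · refine le_trans ?_ (le_max_left _ _)
    rw [div_le_div_iff₀ hs0 hp]
    linarith
  · refine le_trans ?_ (le_max_right _ _)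
    rw [div_le_div_iff₀ hs0 (by norm_num : (0:ℝ) < 2)]
    nlinarith
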